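/- arXiv:2209.09119 — 3 statements merged into one kernel-verified Lean document; each statement's English description precedes it below -/
import Mathlib

section
/- Let x̄ ∈ S* and q > 0. If the residual mapping R is q-subregular at x̄ for 0 (i.e., there exist ν > 0 and δ > 0 with dist(x, S*) ≤ ν‖R(x)‖^q for all x ∈ B(x̄, δ)), then ∂F is q-subregular at x̄ for 0: there exist κ > 0 and δ′ > 0 such that dist(x, S*) ≤ κ·dist(0, ∂F(x))^q for all x ∈ B(x̄, δ′). -/
open Set Metric Filter Bornology
open scoped RealInnerProductSpace Topology ENNReal

noncomputable section

/-- Euclidean space `ℝⁿ`. -/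
abbrev Eu (n : ℕ) : Type := EuclideanSpace ℝ (Fin n)

/-- The convex subdifferential of an extended-real-valued function `g` at `x`. -/
def subdiff {n : ℕ} (g : Eu n → EReal) (x : Eu n) : Set (Eu n) :=
  {v | ∀ z : Eu n, g x + ((⟪v, z - x⟫ : ℝ) : EReal) ≤ g z}

/-- `g` is proper: not identically `+∞` and nowhere `-∞`. -/
def ProperFun {n : ℕ} (g : Eu n → EReal) : Prop :=
  (∃ x, g x ≠ ⊤) ∧ ∀ x, g x ≠ ⊥

/-- `g` is convex. -/
def ConvexFun {n : ℕ} (g : Eu n → EReal) : Prop :=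
  ∀ x z : Eu n, ∀ a c : ℝ, 0 ≤ a → 0 ≤ c → a + c = 1 →
    g (a • x + c • z) ≤ (a : EReal) * g x + (c : EReal) * g z

/-- The effective domain of `g`. -/
def domg {n : ℕ} (g : Eu n → EReal) : Set (Eu n) := {x | g x ≠ ⊤}

/-- `prox` is the proximal mapping of `g` (with parameter 1). -/
def IsProxOf {n : ℕ} (g : Eu n → EReal) (prox : Eu n → Eu n) : Prop :=
  ∀ z u : Eu n,
    ((‖prox z - z‖ ^ 2 / 2 : ℝ) : EReal) + g (prox z)
      ≤ ((‖u - z‖ ^ 2 / 2 : ℝ) : EReal) + g u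

/-- `f(x) = ψ(Ax - b)`. -/
def fval {n m : ℕ} (ψ : Eu m → ℝ) (A : Eu n →L[ℝ] Eu m) (b : Eu m) (x : Eu n) : ℝ :=
  ψ (A x - b)

/-- `∇f(x) = Aᵀ ∇ψ(Ax - b)`. -/
def gradfval {n m : ℕ} (gradψ : Eu m → Eu m) (A : Eu n →L[ℝ] Eu m) (b : Eu m)
    (x : Eu n) : Eu n :=
  ContinuousLinearMap.adjoint A (gradψ (A x - b))

/-- `∇²f(x) = Aᵀ ∇²ψ(Ax - b) A`. -/
def hessfval {n m : ℕ} (hessψ : Eu m → (Eu m →L[ℝ] Eu m)) (A : Eu n →L[ℝ] Eu m) (b : Eu m)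
    (x : Eu n) : Eu n →L[ℝ] Eu n :=
  (ContinuousLinearMap.adjoint A).comp ((hessψ (A x - b)).comp A)

/-- `F = f + g`, extended-real-valued. -/
def Fval {n m : ℕ} (ψ : Eu m → ℝ) (A : Eu n →L[ℝ] Eu m) (b : Eu m) (g : Eu n → EReal)
    (x : Eu n) : EReal :=
  ((fval ψ A b x : ℝ) : EReal) + g x

/-- The residual mapping `R(x) = x - prox_g(x - ∇f(x))`. -/
def Rres {n m : ℕ} (gradψ : Eu m → Eu m) (A : Eu n →L[ℝ] Eu m) (b : Eu m)
    (prox : Eu n → Eu n) (x : Eu n) : Eu n :=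
  x - prox (x - gradfval gradψ A b x)

/-- The KKT residual `r(x) = ‖R(x)‖`. -/
def rres {n m : ℕ} (gradψ : Eu m → Eu m) (A : Eu n →L[ℝ] Eu m) (b : Eu m)
    (prox : Eu n → Eu n) (x : Eu n) : ℝ :=
  ‖Rres gradψ A b prox x‖

/-- The subdifferential `∂F(x) = ∇f(x) + ∂g(x)`. -/
def subF {n m : ℕ} (gradψ : Eu m → Eu m) (A : Eu n →L[ℝ] Eu m) (b : Eu m)
    (g : Eu n → EReal) (x : Eu n) : Set (Eu n) :=
  {u | u - gradfval gradψ A b x ∈ subdiff g x}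

/-- The stationary point set `S* = {x : 0 ∈ ∂F(x)}`. -/
def SstarSet {n m : ℕ} (gradψ : Eu m → Eu m) (A : Eu n →L[ℝ] Eu m) (b : Eu m)
    (g : Eu n → EReal) : Set (Eu n) :=
  {x | (0 : Eu n) ∈ subF gradψ A b g x}

/-- Smallest eigenvalue of a (self-adjoint) operator, via the Rayleigh quotient. -/
def lamMin {m : ℕ} (T : Eu m →L[ℝ] Eu m) : ℝ :=
  sInf ((fun v => ⟪T v, v⟫) '' Metric.sphere (0 : Eu m) 1)

/-- The strong stationary point set `X* = {x ∈ S* : ∇²ψ(Ax-b) ⪰ 0}`. -/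
def XstarSet {n m : ℕ} (gradψ : Eu m → Eu m) (hessψ : Eu m → (Eu m →L[ℝ] Eu m))
    (A : Eu n →L[ℝ] Eu m) (b : Eu m) (g : Eu n → EReal) : Set (Eu n) :=
  {x | x ∈ SstarSet gradψ A b g ∧ ∀ v : Eu m, 0 ≤ ⟪hessψ (A x - b) v, v⟫}

/-- `ψ` is twice continuously differentiable on `A(O) - b`, with gradient `gradψ`
and Hessian `hessψ` there. -/
def TwiceDiffOn {n m : ℕ} (ψ : Eu m → ℝ) (gradψ : Eu m → Eu m)
    (hessψ : Eu m → (Eu m →L[ℝ] Eu m)) (A : Eu n →L[ℝ] Eu m) (b : Eu m)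
    (O : Set (Eu n)) : Prop :=
  (∀ u ∈ (fun z : Eu n => A z - b) '' O, HasGradientAt ψ (gradψ u) u) ∧
  (∀ u ∈ (fun z : Eu n => A z - b) '' O, HasFDerivAt gradψ (hessψ u) u) ∧
  ContinuousOn gradψ ((fun z : Eu n => A z - b) '' O) ∧
  ContinuousOn hessψ ((fun z : Eu n => A z - b) '' O)

/-- Assumption 1.1 of the paper, together with the data of the proximal map of `g`. -/
def BasicAssumptions {n m : ℕ} (ψ : Eu m → ℝ) (gradψ : Eu m → Eu m)
    (hessψ : Eu m → (Eu m →L[ℝ] Eu m)) (A : Eu n →L[ℝ] Eu m) (b : Eu m)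
    (g : Eu n → EReal) (prox : Eu n → Eu n) (O : Set (Eu n)) : Prop :=
  IsOpen O ∧ domg g ⊆ O ∧ TwiceDiffOn ψ gradψ hessψ A b O ∧
  ProperFun g ∧ ConvexFun g ∧ LowerSemicontinuous g ∧ ContinuousOn g (domg g) ∧
  IsProxOf g prox ∧
  (∃ c : ℝ, ∀ x, (c : EReal) ≤ Fval ψ A b g x) ∧
  (∀ c : ℝ, Bornology.IsBounded {x | Fval ψ A b g x ≤ (c : EReal)})

/-- The regularized Hessian `G_k = ∇²f(x_k) + a₁ [−λ_min(∇²ψ(Ax_k−b))]₊ AᵀA + μ I`. -/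
def GkOf {n m : ℕ} (hessψ : Eu m → (Eu m →L[ℝ] Eu m)) (A : Eu n →L[ℝ] Eu m) (b : Eu m)
    (a₁ μ : ℝ) (xk : Eu n) : Eu n →L[ℝ] Eu n :=
  hessfval hessψ A b xk
    + (a₁ * max 0 (-(lamMin (hessψ (A xk - b))))) • ((ContinuousLinearMap.adjoint A).comp A)
    + μ • (ContinuousLinearMap.id ℝ (Eu n))

/-- `R_k(y) = y - prox_g(y - ∇f(x_k) - G(y - x_k))`. -/
def RkRes {n m : ℕ} (gradψ : Eu m → Eu m) (A : Eu n →L[ℝ] Eu m) (b : Eu m)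
    (prox : Eu n → Eu n) (G : Eu n →L[ℝ] Eu n) (xk yy : Eu n) : Eu n :=
  yy - prox (yy - gradfval gradψ A b xk - G (yy - xk))

/-- `r_k(y) = ‖R_k(y)‖`. -/
def rkRes {n m : ℕ} (gradψ : Eu m → Eu m) (A : Eu n →L[ℝ] Eu m) (b : Eu m)
    (prox : Eu n → Eu n) (G : Eu n →L[ℝ] Eu n) (xk yy : Eu n) : ℝ :=
  ‖RkRes gradψ A b prox G xk yy‖

/-- The subproblem objective
`Θ_k(x) = f(x_k) + ⟨∇f(x_k), x - x_k⟩ + (1/2)⟨x - x_k, G (x - x_k)⟩ + g(x)`. -/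
def ThetaK {n m : ℕ} (ψ : Eu m → ℝ) (gradψ : Eu m → Eu m) (A : Eu n →L[ℝ] Eu m) (b : Eu m)
    (g : Eu n → EReal) (G : Eu n →L[ℝ] Eu n) (xk x : Eu n) : EReal :=
  ((fval ψ A b xk + ⟪gradfval gradψ A b xk, x - xk⟫
      + ⟪x - xk, G (x - xk)⟫ / 2 : ℝ) : EReal) + g x

/-- The Armijo descent condition `F(x_k) - F(x_k + βᵐ d) ≥ σ βᵐ μ ‖d‖²`. -/
def ArmijoOK {n m : ℕ} (ψ : Eu m → ℝ) (A : Eu n →L[ℝ] Eu m) (b : Eu m) (g : Eu n → EReal)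
    (σ β μ : ℝ) (xk dk : Eu n) (M : ℕ) : Prop :=
  Fval ψ A b g (xk + β ^ M • dk) + ((σ * β ^ M * μ * ‖dk‖ ^ 2 : ℝ) : EReal)
    ≤ Fval ψ A b g xk

/-- `hessψ` is strictly continuous at `u0` relative to `S` with modulus `Lψ`. -/
def StrictContAt {m : ℕ} (hessψ : Eu m → (Eu m →L[ℝ] Eu m)) (S : Set (Eu m)) (u0 : Eu m)
    (Lψ : ℝ) : Prop :=
  0 ≤ Lψ ∧ ∃ δ₀ > (0 : ℝ), ∀ z ∈ Metric.closedBall u0 δ₀ ∩ S,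
    ∀ z' ∈ Metric.closedBall u0 δ₀ ∩ S, ‖hessψ z - hessψ z'‖ ≤ Lψ * ‖z - z'‖

/-- The KL property of `F = f + g` at `xbar` (general desingularizing function `φ`). -/
def KLatGen {n m : ℕ} (ψ : Eu m → ℝ) (gradψ : Eu m → Eu m) (A : Eu n →L[ℝ] Eu m) (b : Eu m)
    (g : Eu n → EReal) (xbar : Eu n) : Prop :=
  ∃ δ > (0 : ℝ), ∃ ϖ : EReal, 0 < ϖ ∧ ∃ φ dφ : ℝ → ℝ,
    φ 0 = 0 ∧
    ContinuousOn φ {t : ℝ | 0 ≤ t ∧ (t : EReal) < ϖ} ∧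
    ConcaveOn ℝ {t : ℝ | 0 ≤ t ∧ (t : EReal) < ϖ} φ ∧
    (∀ t : ℝ, 0 < t → (t : EReal) < ϖ → HasDerivAt φ (dφ t) t ∧ 0 < dφ t) ∧
    ∀ z ∈ Metric.closedBall xbar δ,
      Fval ψ A b g xbar < Fval ψ A b g z → Fval ψ A b g z < Fval ψ A b g xbar + ϖ →
        ∀ v ∈ subF gradψ A b g z,
          1 ≤ dφ ((Fval ψ A b g z - Fval ψ A b g xbar).toReal) * ‖v‖

/-- The KL property of `F = f + g` with exponent `θ` at `xbar`. -/
def KLexpAt {n m : ℕ} (ψ : Eu m → ℝ) (gradψ : Eu m → Eu m) (A : Eu n →L[ℝ] Eu m) (b : Eu m)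
    (g : Eu n → EReal) (θ : ℝ) (xbar : Eu n) : Prop :=
  ∃ δ > (0 : ℝ), ∃ ϖ : EReal, 0 < ϖ ∧ ∃ c > (0 : ℝ),
    ∀ z ∈ Metric.closedBall xbar δ,
      Fval ψ A b g xbar < Fval ψ A b g z → Fval ψ A b g z < Fval ψ A b g xbar + ϖ →
        ∀ v ∈ subF gradψ A b g z,
          1 ≤ c * (1 - θ) * ((Fval ψ A b g z - Fval ψ A b g xbar).toReal) ^ (-θ) * ‖v‖

end

noncomputable section

-- g (prox s) is a real number
lemma gprox_real {n : ℕ} {g : Eu n → EReal} {prox : Eu n → Eu n}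
    (hp : ProperFun g) (hpr : IsProxOf g prox) (s : Eu n) :
    ∃ r : ℝ, g (prox s) = (r : EReal) := by
  obtain ⟨⟨x0, hx0⟩, hbot⟩ := hp
  have h := hpr s x0
  have hne : g (prox s) ≠ ⊤ := by
    intro htop
    rw [htop] at h
    simp only [EReal.add_top_of_ne_bot (by simp : ((‖prox s - s‖^2/2 : ℝ) : EReal) ≠ ⊥)] at h
    exact absurd (lt_of_le_of_lt h (EReal.add_lt_top (EReal.coe_ne_top _) hx0)) (lt_irrefl _)
  lift g (prox s) to ℝ using ⟨hne, hbot _⟩ with r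
  exact ⟨r, rfl⟩

-- subgradient property of the prox
lemma prox_subgrad {n : ℕ} {g : Eu n → EReal} {prox : Eu n → Eu n}
    (hp : ProperFun g) (hc : ConvexFun g) (hpr : IsProxOf g prox) (s : Eu n) :
    s - prox s ∈ subdiff g (prox s) := by
  set p := prox s with hpdef
  obtain ⟨rp, hrp⟩ := gprox_real hp hpr s
  intro z
  by_cases hz : g z = ⊤
  · rw [hz]; exact le_top
  obtain ⟨rz, hrz⟩ : ∃ r : ℝ, g z = (r : EReal) := by
    lift g z to ℝ using ⟨hz, hp.2 _⟩ with r; exact ⟨r, rfl⟩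
  rw [hrp, hrz, ← EReal.coe_add, EReal.coe_le_coe_iff]
  -- real goal : rp + ⟪s - p, z - p⟫ ≤ rz
  have key : ∀ t : ℝ, 0 < t → t ≤ 1 →
      rp ≤ ⟪p - s, z - p⟫ + t * (‖z - p‖^2 / 2) + rz := by
    intro t ht ht1
    have hconv := hc p z (1 - t) t (by linarith) ht.le (by ring)
    set u : Eu n := (1 - t) • p + t • z with hu
    have husp : u - s = (p - s) + t • (z - p) := by
      simp only [hu]; module
    have hnorm : ‖u - s‖^2 = ‖p - s‖^2 + 2 * t * ⟪p - s, z - p⟫ + t^2 * ‖z - p‖^2 := by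
      rw [husp, norm_add_sq_real, real_inner_smul_right, norm_smul]
      simp [mul_pow, abs_of_pos ht]; ring
    have hchain : ((‖p - s‖^2/2 : ℝ) : EReal) + (rp : EReal)
        ≤ ((‖u - s‖^2/2 : ℝ) : EReal) + (((1-t) * rp + t * rz : ℝ) : EReal) := by
      calc ((‖p - s‖^2/2 : ℝ) : EReal) + (rp : EReal)
          = ((‖p - s‖^2/2 : ℝ) : EReal) + g p := by rw [hrp]
        _ ≤ ((‖u - s‖^2/2 : ℝ) : EReal) + g u := hpr s u
        _ ≤ ((‖u - s‖^2/2 : ℝ) : EReal) + (((1-t) * rp + t * rz : ℝ) : EReal) := by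
            apply add_le_add_right
            calc g u ≤ ((1-t : ℝ) : EReal) * g p + ((t : ℝ) : EReal) * g z := hconv
              _ = (((1-t) * rp + t * rz : ℝ) : EReal) := by
                  rw [hrp, hrz, ← EReal.coe_mul, ← EReal.coe_mul, ← EReal.coe_add]
    rw [← EReal.coe_add, ← EReal.coe_add, EReal.coe_le_coe_iff] at hchain
    rw [hnorm] at hchain
    nlinarith [hchain]
  -- take t → 0
  have hlim : rp ≤ ⟪p - s, z - p⟫ + rz := by
    by_contra hcon
    push_neg at hcon
    set ε := rp - (⟪p - s, z - p⟫ + rz) with hε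
    have hεpos : 0 < ε := by linarith
    set D := ‖z - p‖^2 / 2 with hD
    have hDpos : 0 ≤ D := by positivity
    have ht := key (min 1 (ε / (2 * (D + 1)))) (by positivity) (min_le_left _ _)
    have h2 : min 1 (ε / (2 * (D + 1))) * D ≤ ε / 2 := by
      calc min 1 (ε / (2 * (D + 1))) * D ≤ (ε / (2 * (D + 1))) * D := by
            apply mul_le_mul_of_nonneg_right (min_le_right _ _) hDpos
        _ ≤ ε / 2 := by
            rw [div_mul_eq_mul_div, div_le_div_iff₀ (by positivity) (by norm_num)]
            nlinarith
    linarith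
  have : ⟪s - p, z - p⟫ = -⟪p - s, z - p⟫ := by
    rw [← inner_neg_left]; congr 1; abel
  linarith [hlim, this.ge, this.le]

-- fixed point property
lemma subgrad_fixed {n : ℕ} {g : Eu n → EReal} {prox : Eu n → Eu n}
    (hp : ProperFun g) (hpr : IsProxOf g prox) (x u : Eu n)
    (hu : u ∈ subdiff g x) : prox (x + u) = x := by
  obtain ⟨⟨x0, hx0⟩, hbot⟩ := hp
  have hxne : g x ≠ ⊤ := by
    intro htop
    have := hu x0
    rw [htop, EReal.top_add_of_ne_bot (by simp)] at this
    exact hx0 (top_le_iff.mp this)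
  obtain ⟨rx, hrx⟩ : ∃ r : ℝ, g x = (r : EReal) := by
    lift g x to ℝ using ⟨hxne, hbot _⟩ with r; exact ⟨r, rfl⟩
  set s := x + u with hs
  set p := prox s with hpdef
  obtain ⟨rp, hrp⟩ := gprox_real ⟨⟨x0, hx0⟩, hbot⟩ hpr s
  have h1 := hu p
  rw [hrx, hrp, ← EReal.coe_add, EReal.coe_le_coe_iff] at h1
  have h2 := hpr s x
  rw [hrx, hrp, ← EReal.coe_add, ← EReal.coe_add, EReal.coe_le_coe_iff] at h2
  have hxs : x - s = -u := by simp [hs]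
  have hps : p - s = (p - x) - u := by simp [hs]; abel
  rw [hxs, hps, norm_neg] at h2
  have hexp : ‖(p - x) - u‖^2 = ‖p - x‖^2 - 2 * ⟪p - x, u⟫ + ‖u‖^2 := by
    rw [norm_sub_sq_real]
  have hinner : ⟪u, p - x⟫ = ⟪p - x, u⟫ := real_inner_comm _ _
  have : ‖p - x‖^2 ≤ 0 := by nlinarith [h1, h2]
  have : p - x = 0 := by
    have := norm_le_zero_iff.mp (by nlinarith [norm_nonneg (p - x)] : ‖p - x‖ ≤ 0)
    exact this
  have := sub_eq_zero.mp this
  exact this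

-- nonexpansiveness
lemma prox_nonexpansive {n : ℕ} {g : Eu n → EReal} {prox : Eu n → Eu n}
    (hp : ProperFun g) (hc : ConvexFun g) (hpr : IsProxOf g prox) (s t : Eu n) :
    ‖prox s - prox t‖ ≤ ‖s - t‖ := by
  set p := prox s
  set p' := prox t
  obtain ⟨rp, hrp⟩ := gprox_real hp hpr s
  obtain ⟨rp', hrp'⟩ := gprox_real hp hpr t
  have h1 := prox_subgrad hp hc hpr s p'
  have h2 := prox_subgrad hp hc hpr t p
  rw [hrp, hrp', ← EReal.coe_add, EReal.coe_le_coe_iff] at h1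
  rw [hrp, hrp', ← EReal.coe_add, EReal.coe_le_coe_iff] at h2
  -- h1 : rp + ⟪s - p, p' - p⟫ ≤ rp'
  -- h2 : rp' + ⟪t - p', p - p'⟫ ≤ rp
  have hsum : ⟪s - p, p' - p⟫ + ⟪t - p', p - p'⟫ ≤ 0 := by linarith
  have hexpand : ⟪s - p, p' - p⟫ + ⟪t - p', p - p'⟫
      = ‖p - p'‖^2 - ⟪s - t, p - p'⟫ := by
    have e1 : ⟪s - p, p' - p⟫ = -⟪s - p, p - p'⟫ := by
      rw [← inner_neg_right]; congr 1; abel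
    have e3 : (t - p') - (s - p) = -(s - t) + (p - p') := by abel
    calc ⟪s - p, p' - p⟫ + ⟪t - p', p - p'⟫
        = ⟪(t - p') - (s - p), p - p'⟫ := by simp only [e1, inner_sub_left]; ring
      _ = ⟪-(s - t), p - p'⟫ + ⟪p - p', p - p'⟫ := by rw [e3, inner_add_left]
      _ = ‖p - p'‖ ^ 2 - ⟪s - t, p - p'⟫ := by
          rw [inner_neg_left, real_inner_self_eq_norm_sq]; ring
  rw [hexpand] at hsum
  have hcs : ⟪s - t, p - p'⟫ ≤ ‖s - t‖ * ‖p - p'‖ := real_inner_le_norm _ _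
  by_cases hz : ‖p - p'‖ = 0
  · rw [hz]; positivity
  · have hpos : 0 < ‖p - p'‖ := lt_of_le_of_ne (norm_nonneg _) (Ne.symm hz)
    nlinarith

/-- Lemma 2.1, second part. If the residual mapping `R` is `q`-subregular
at `x̄ ∈ S*` for `0`, then so is `∂F` at `x̄` for `0`. -/
theorem statement2 {n m : ℕ} (ψ : Eu m → ℝ) (gradψ : Eu m → Eu m)
    (hessψ : Eu m → (Eu m →L[ℝ] Eu m)) (A : Eu n →L[ℝ] Eu m) (b : Eu m)
    (g : Eu n → EReal) (prox : Eu n → Eu n) (O : Set (Eu n))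
    (hbasic : BasicAssumptions ψ gradψ hessψ A b g prox O)
    (xbar : Eu n) (hxbar : xbar ∈ SstarSet gradψ A b g)
    (q : ℝ) (hq : 0 < q)
    (hsub : ∃ ν > (0 : ℝ), ∃ δ > (0 : ℝ), ∀ z ∈ Metric.closedBall xbar δ,
        Metric.infDist z (SstarSet gradψ A b g)
          ≤ ν * (rres gradψ A b prox z) ^ q) :
    ∃ κ > (0 : ℝ), ∃ δ' > (0 : ℝ), ∀ z ∈ Metric.closedBall xbar δ',
      ∀ v ∈ subF gradψ A b g z,
        Metric.infDist z (SstarSet gradψ A b g) ≤ κ * ‖v‖ ^ q := by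
  obtain ⟨ν, hν, δ, hδ, hball⟩ := hsub
  obtain ⟨_, _, _, hp, hc, _, _, hpr, _, _⟩ := hbasic
  refine ⟨ν, hν, δ, hδ, ?_⟩
  intro z hz v hv
  have hfix := subgrad_fixed hp hpr z (v - gradfval gradψ A b z) hv
  have hr : rres gradψ A b prox z ≤ ‖v‖ := by
    have heq : z - prox (z - gradfval gradψ A b z)
        = prox (z + (v - gradfval gradψ A b z)) - prox (z - gradfval gradψ A b z) := by
      rw [hfix]
    calc rres gradψ A b prox z
        = ‖prox (z + (v - gradfval gradψ A b z)) - prox (z - gradfval gradψ A b z)‖ := by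
          rw [rres, Rres, heq]
      _ ≤ ‖(z + (v - gradfval gradψ A b z)) - (z - gradfval gradψ A b z)‖ :=
          prox_nonexpansive hp hc hpr _ _
      _ = ‖v‖ := by congr 1; abel
  calc Metric.infDist z (SstarSet gradψ A b g)
      ≤ ν * (rres gradψ A b prox z) ^ q := hball z hz
    _ ≤ ν * ‖v‖ ^ q := by
        apply mul_le_mul_of_nonneg_left _ hν.le
        exact Real.rpow_le_rpow (norm_nonneg _) hr hq.le

end
end

section
/- Let x̄ ∈ S* and q > 0, and suppose Assumption A0 holds at x̄. If ∂F is q-subregular at x̄ for 0, then F has the KL property of exponent max{1/(2q), 1/(1+q)} at x̄; explicitly, there exist δ > 0 and c > 0 such that dist(0, ∂F(z)) ≥ c·(F(z) − F(x̄))^{max{1/(2q), 1/(1+q)}} for all z ∈ B(x̄, δ) with F(x̄) < F(z) < F(x̄) + δ. -/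
open Set Metric Filter Bornology
open scoped RealInnerProductSpace Topology ENNReal

noncomputable section

lemma subdiff_ne_top {n : ℕ} {g : Eu n → EReal} (hp : ProperFun g) {x v : Eu n}
    (h : v ∈ subdiff g x) : g x ≠ ⊤ := by
  intro hx
  obtain ⟨y, hy⟩ := hp.1
  have h2 := h y
  rw [hx, EReal.top_add_of_ne_bot (EReal.coe_ne_bot _)] at h2
  exact hy (top_le_iff.mp h2)

lemma fval_hasFDerivAt {n m : ℕ} {ψ : Eu m → ℝ} {gradψ : Eu m → Eu m}
    {A : Eu n →L[ℝ] Eu m} {b : Eu m} {x : Eu n}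
    (h : HasGradientAt ψ (gradψ (A x - b)) (A x - b)) :
    HasFDerivAt (fval ψ A b) ((InnerProductSpace.toDual ℝ (Eu n)) (gradfval gradψ A b x)) x := by
  have h3 : HasFDerivAt (fun y : Eu n => A y - b) (A : Eu n →L[ℝ] Eu m) x :=
    (A.hasFDerivAt).sub_const b
  have h4 := (h.hasFDerivAt).comp x h3
  have heq : ((InnerProductSpace.toDual ℝ (Eu m)) (gradψ (A x - b))).comp A
      = (InnerProductSpace.toDual ℝ (Eu n)) (gradfval gradψ A b x) := by
    ext w
    simp [gradfval, InnerProductSpace.toDual_apply_apply, ContinuousLinearMap.adjoint_inner_left]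
  rw [heq] at h4
  exact h4

lemma gradfval_hasFDerivAt {n m : ℕ} {gradψ : Eu m → Eu m}
    {hessψ : Eu m → (Eu m →L[ℝ] Eu m)} {A : Eu n →L[ℝ] Eu m} {b : Eu m} {x : Eu n}
    (h : HasFDerivAt gradψ (hessψ (A x - b)) (A x - b)) :
    HasFDerivAt (gradfval gradψ A b) (hessfval hessψ A b x) x := by
  have h3 : HasFDerivAt (fun y : Eu n => A y - b) (A : Eu n →L[ℝ] Eu m) x :=
    (A.hasFDerivAt).sub_const b
  have h4 := h.comp x h3
  have h5 := ((ContinuousLinearMap.adjoint A).hasFDerivAt).comp x h4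
  exact h5

end
noncomputable section

lemma descent_ineq {n m : ℕ} {ψ : Eu m → ℝ} {gradψ : Eu m → Eu m}
    {A : Eu n →L[ℝ] Eu m} {b : Eu m} {s : Set (Eu n)} (hconv : Convex ℝ s) {C : ℝ}
    (hC : 0 ≤ C)
    (hfd : ∀ x ∈ s, HasFDerivAt (fval ψ A b)
      ((InnerProductSpace.toDual ℝ (Eu n)) (gradfval gradψ A b x)) x)
    (hLip : ∀ x ∈ s, ∀ y ∈ s, ‖gradfval gradψ A b x - gradfval gradψ A b y‖ ≤ C * ‖x - y‖)
    {x y : Eu n} (hx : x ∈ s) (hy : y ∈ s) :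
    fval ψ A b y - fval ψ A b x ≤ ⟪gradfval gradψ A b y, y - x⟫ + C * ‖y - x‖^2 := by
  have hmem : ∀ τ ∈ Set.Icc (0:ℝ) 1, x + τ • (y - x) ∈ s := by
    intro τ hτ
    have h := hconv hx hy (by linarith [hτ.2] : (0:ℝ) ≤ 1 - τ) hτ.1 (by ring)
    convert h using 1
    module
  have hline : ∀ τ : ℝ, HasDerivAt (fun τ : ℝ => x + τ • (y - x)) (y - x) τ := by
    intro τ
    simpa using ((hasDerivAt_id τ).smul_const (y - x)).const_add x
  have hφ : ∀ τ ∈ Set.Icc (0:ℝ) 1, HasDerivAt (fun τ : ℝ => fval ψ A b (x + τ • (y - x)))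
      (⟪gradfval gradψ A b (x + τ • (y - x)), y - x⟫) τ := by
    intro τ hτ
    have h := (hfd _ (hmem τ hτ)).comp_hasDerivAt τ (hline τ)
    simpa [InnerProductSpace.toDual_apply_apply, Function.comp_def] using h
  obtain ⟨τ, hτ, heq⟩ := exists_hasDerivAt_eq_slope
    (fun τ : ℝ => fval ψ A b (x + τ • (y - x)))
    (fun τ => ⟪gradfval gradψ A b (x + τ • (y - x)), y - x⟫) one_pos
    (fun τ hτ => ((hφ τ hτ).continuousAt).continuousWithinAt)
    (fun τ hτ => hφ τ (Set.mem_Icc_of_Ioo hτ))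
  have e1 : x + (1:ℝ) • (y - x) = y := by module
  have e0 : x + (0:ℝ) • (y - x) = x := by module
  rw [e1, e0] at heq
  have h1 : fval ψ A b y - fval ψ A b x
      = ⟪gradfval gradψ A b (x + τ • (y - x)), y - x⟫ := by
    rw [heq]; norm_num
  have h3 : ⟪gradfval gradψ A b (x + τ • (y - x)) - gradfval gradψ A b y, y - x⟫
      ≤ C * ‖y - x‖^2 := by
    have hb := real_inner_le_norm
      (gradfval gradψ A b (x + τ • (y - x)) - gradfval gradψ A b y) (y - x)
    have hl := hLip _ (hmem τ (Set.mem_Icc_of_Ioo hτ)) y hy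
    have hns : ‖x + τ • (y - x) - y‖ ≤ ‖y - x‖ := by
      have e2 : x + τ • (y - x) - y = (1 - τ) • (x - y) := by module
      rw [e2, norm_smul, Real.norm_eq_abs]
      have habs : |1 - τ| ≤ 1 := by
        rw [abs_le]; constructor
        · linarith [hτ.2]
        · linarith [hτ.1]
      have h' : ‖x - y‖ = ‖y - x‖ := norm_sub_rev _ _
      nlinarith [norm_nonneg (x - y)]
    calc ⟪gradfval gradψ A b (x + τ • (y - x)) - gradfval gradψ A b y, y - x⟫
        ≤ ‖gradfval gradψ A b (x + τ • (y - x)) - gradfval gradψ A b y‖ * ‖y - x‖ := hb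
      _ ≤ (C * ‖x + τ • (y - x) - y‖) * ‖y - x‖ :=
          mul_le_mul_of_nonneg_right hl (norm_nonneg _)
      _ ≤ (C * ‖y - x‖) * ‖y - x‖ := by
          have := mul_le_mul_of_nonneg_left hns hC
          nlinarith [norm_nonneg (y - x)]
      _ = C * ‖y - x‖^2 := by ring
  have h2 : ⟪gradfval gradψ A b (x + τ • (y - x)), y - x⟫
      = ⟪gradfval gradψ A b y, y - x⟫
        + ⟪gradfval gradψ A b (x + τ • (y - x)) - gradfval gradψ A b y, y - x⟫ := by
    rw [inner_sub_left]; ring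
  linarith [h1, h2, h3]

end
noncomputable section

set_option maxHeartbeats 2000000 in
/-- Proposition 2.2 (i). Under Assumption A0 at `x̄ ∈ S*`, the
`q`-subregularity of `∂F` at `x̄` for `0` implies that `F` has the KL property of exponent
`max{1/(2q), 1/(1+q)}` at `x̄`. -/
theorem statement3 {n m : ℕ} (ψ : Eu m → ℝ) (gradψ : Eu m → Eu m)
    (hessψ : Eu m → (Eu m →L[ℝ] Eu m)) (A : Eu n →L[ℝ] Eu m) (b : Eu m)
    (g : Eu n → EReal) (prox : Eu n → Eu n) (O : Set (Eu n))
    (hbasic : BasicAssumptions ψ gradψ hessψ A b g prox O)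
    (xbar : Eu n) (hxbar : xbar ∈ SstarSet gradψ A b g)
    (q : ℝ) (hq : 0 < q)
    (hA0 : ∃ ε > (0 : ℝ), ∀ z ∈ SstarSet gradψ A b g ∩ Metric.closedBall xbar ε,
        Fval ψ A b g z ≤ Fval ψ A b g xbar)
    (hsub : ∃ κ > (0 : ℝ), ∃ δ > (0 : ℝ), ∀ z ∈ Metric.closedBall xbar δ,
        ∀ v ∈ subF gradψ A b g z,
          Metric.infDist z (SstarSet gradψ A b g) ≤ κ * ‖v‖ ^ q) :
    ∃ δ > (0 : ℝ), ∃ c > (0 : ℝ), ∀ z ∈ Metric.closedBall xbar δ,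
      Fval ψ A b g xbar < Fval ψ A b g z →
      Fval ψ A b g z < Fval ψ A b g xbar + ((δ : ℝ) : EReal) →
        ∀ v ∈ subF gradψ A b g z,
          c * ((Fval ψ A b g z - Fval ψ A b g xbar).toReal)
              ^ (max (1/(2*q)) (1/(1+q))) ≤ ‖v‖ := by
  obtain ⟨hO, hdom, ⟨hgradψ, hhessψ, hgradc, hhessc⟩, hproper, hconvg, hlsc, hgc, hproxh,
    hlb, hlev⟩ := hbasic
  obtain ⟨ε, hε, hA0⟩ := hA0
  obtain ⟨κ, hκ, δs, hδs, hsub⟩ := hsub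
  -- x̄ lies in O
  have hgxbar_ne_top : g xbar ≠ ⊤ := subdiff_ne_top hproper hxbar
  have hxO : xbar ∈ O := hdom hgxbar_ne_top
  obtain ⟨ρ₀, hρ₀, hballO⟩ := Metric.isOpen_iff.mp hO xbar hxO
  set ρ := ρ₀ / 2 with hρdef
  have hρ : 0 < ρ := by positivity
  have hsO : Metric.closedBall xbar ρ ⊆ O :=
    (Metric.closedBall_subset_ball (by simp [hρdef]; linarith)).trans hballO
  -- bound on the Hessian on a compact neighborhood
  set K := (fun z : Eu n => A z - b) '' Metric.closedBall xbar ρ with hK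
  have hKcpt : IsCompact K :=
    (isCompact_closedBall xbar ρ).image ((A.continuous).sub continuous_const)
  have hKne : K.Nonempty := ⟨A xbar - b, ⟨xbar, Metric.mem_closedBall_self hρ.le, rfl⟩⟩
  have hKsub : K ⊆ (fun z : Eu n => A z - b) '' O := Set.image_mono hsO
  obtain ⟨u₀, hu₀K, hu₀'⟩ := hKcpt.exists_isMaxOn hKne ((hhessc.mono hKsub).norm)
  have hu₀ : ∀ u ∈ K, ‖hessψ u‖ ≤ ‖hessψ u₀‖ := fun u hu => hu₀' hu
  set L := ‖hessψ u₀‖ with hLdef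
  have hL : 0 ≤ L := norm_nonneg _
  set C := ‖ContinuousLinearMap.adjoint A‖ * (L * ‖A‖) with hCdef
  have hC : 0 ≤ C := by positivity
  -- gradient and Lipschitz facts
  have hfd : ∀ x ∈ Metric.closedBall xbar ρ, HasFDerivAt (fval ψ A b)
      ((InnerProductSpace.toDual ℝ (Eu n)) (gradfval gradψ A b x)) x :=
    fun x hx => fval_hasFDerivAt (hgradψ _ ⟨x, hsO hx, rfl⟩)
  have hLip : ∀ x ∈ Metric.closedBall xbar ρ, ∀ y ∈ Metric.closedBall xbar ρ,
      ‖gradfval gradψ A b x - gradfval gradψ A b y‖ ≤ C * ‖x - y‖ := by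
    intro x hx y hy
    refine Convex.norm_image_sub_le_of_norm_hasFDerivWithin_le
      (f' := fun w => hessfval hessψ A b w)
      (fun w hw => (gradfval_hasFDerivAt (hhessψ _ ⟨w, hsO hw, rfl⟩)).hasFDerivWithinAt)
      (fun w hw => ?_) (convex_closedBall _ _) hy hx
    have hb1 : ‖hessψ (A w - b)‖ ≤ L := hu₀ (A w - b) ⟨w, hw, rfl⟩
    calc ‖hessfval hessψ A b w‖
        ≤ ‖ContinuousLinearMap.adjoint A‖ * ‖(hessψ (A w - b)).comp A‖ :=
          ContinuousLinearMap.opNorm_comp_le _ _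
      _ ≤ ‖ContinuousLinearMap.adjoint A‖ * (‖hessψ (A w - b)‖ * ‖A‖) := by
          gcongr
          exact ContinuousLinearMap.opNorm_comp_le _ _
      _ ≤ C := by rw [hCdef]; gcongr
  -- constants
  have h2q : 0 < 2*q := by linarith
  have h1q : 0 < 1+q := by linarith
  set p := min (2*q) (1+q) with hpdef
  have hp : 0 < p := lt_min h2q h1q
  have hθ : max (1/(2*q)) (1/(1+q)) = 1/p := by
    rcases le_total (2*q) (1+q) with h | h
    · rw [hpdef, min_eq_left h, max_eq_left (one_div_le_one_div_of_le h2q h)]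
    · rw [hpdef, min_eq_right h, max_eq_right (one_div_le_one_div_of_le h1q h)]
  set ρ' := min ρ ε with hρ'def
  have hρ'pos : 0 < ρ' := lt_min hρ hε
  have hρ'ρ : ρ' ≤ ρ := min_le_left _ _
  have hρ'ε : ρ' ≤ ε := min_le_right _ _
  set v₀ := min 1 ((ρ'/(4*κ)) ^ (1/q)) with hv₀def
  have hv₀ : 0 < v₀ := lt_min one_pos (Real.rpow_pos_of_pos (by positivity) _)
  have hv₀1 : v₀ ≤ 1 := min_le_left _ _
  set C₁ := 2*κ + 4*C*κ^2 with hC₁def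
  have hC₁ : 0 < C₁ := by nlinarith [mul_nonneg hC (sq_nonneg κ)]
  set c := min v₀ (C₁ ^ (-(1/p))) with hcdef
  have hcpos : 0 < c := lt_min hv₀ (Real.rpow_pos_of_pos hC₁ _)
  set δ := min (min 1 (ρ'/2)) δs with hδdef
  have hδpos : 0 < δ := lt_min (lt_min one_pos (by positivity)) hδs
  have hδ1 : δ ≤ 1 := (min_le_left _ _).trans (min_le_left _ _)
  have hδρ' : δ ≤ ρ'/2 := (min_le_left _ _).trans (min_le_right _ _)
  have hδδs : δ ≤ δs := min_le_right _ _
  refine ⟨δ, hδpos, c, hcpos, ?_⟩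
  intro z hz hlt hub v hv
  -- real values of F
  have hgz_ne_top : g z ≠ ⊤ := subdiff_ne_top hproper hv
  have hgz_ne_bot : g z ≠ ⊥ := hproper.2 z
  have hgxbar_ne_bot : g xbar ≠ ⊥ := hproper.2 xbar
  have hFz : Fval ψ A b g z = (((fval ψ A b z + (g z).toReal : ℝ)) : EReal) := by
    rw [EReal.coe_add, EReal.coe_toReal hgz_ne_top hgz_ne_bot]; rfl
  have hFxb : Fval ψ A b g xbar
      = (((fval ψ A b xbar + (g xbar).toReal : ℝ)) : EReal) := by
    rw [EReal.coe_add, EReal.coe_toReal hgxbar_ne_top hgxbar_ne_bot]; rfl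
  rw [hFz, hFxb] at hlt hub ⊢
  rw [← EReal.coe_sub, EReal.toReal_coe, hθ]
  set t := fval ψ A b z + (g z).toReal - (fval ψ A b xbar + (g xbar).toReal) with htdef
  have hlt' : fval ψ A b xbar + (g xbar).toReal < fval ψ A b z + (g z).toReal := by
    exact_mod_cast hlt
  have hub' : fval ψ A b z + (g z).toReal
      < fval ψ A b xbar + (g xbar).toReal + δ := by
    exact_mod_cast hub
  have ht : 0 < t := by rw [htdef]; linarith
  have htδ : t < δ := by rw [htdef]; linarith
  have hzδ : dist z xbar ≤ δ := Metric.mem_closedBall.mp hz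
  -- case v = 0
  by_cases hv0 : v = 0
  · exfalso
    have hzS : z ∈ SstarSet gradψ A b g := by
      have : (0 : Eu n) ∈ subF gradψ A b g z := hv0 ▸ hv
      exact this
    have hzε : z ∈ Metric.closedBall xbar ε := by
      rw [Metric.mem_closedBall]; linarith
    have hle := hA0 z ⟨hzS, hzε⟩
    rw [hFz, hFxb] at hle
    have hle' : fval ψ A b z + (g z).toReal
        ≤ fval ψ A b xbar + (g xbar).toReal := by exact_mod_cast hle
    linarith
  have hV : 0 < ‖v‖ := norm_pos_iff.mpr hv0
  have hVq_pos : 0 < ‖v‖ ^ q := Real.rpow_pos_of_pos hV q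
  have hzδs : z ∈ Metric.closedBall xbar δs := by
    rw [Metric.mem_closedBall]; linarith
  have hid := hsub z hzδs v hv
  have hidlt : Metric.infDist z (SstarSet gradψ A b g) < 2*κ*‖v‖^q := by
    have hpos := mul_pos hκ hVq_pos
    linarith
  obtain ⟨xs, hxsS, hxsd⟩ := (Metric.infDist_lt_iff ⟨xbar, hxbar⟩).mp hidlt
  by_cases hVs : ‖v‖ ≤ v₀
  · -- main case
    have hVq : ‖v‖^q ≤ ρ'/(4*κ) := by
      have h1 : ‖v‖ ≤ (ρ'/(4*κ))^(1/q) := hVs.trans (min_le_right _ _)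
      have h2 := Real.rpow_le_rpow (norm_nonneg v) h1 hq.le
      rwa [← Real.rpow_mul (by positivity : (0:ℝ) ≤ ρ'/(4*κ)),
        one_div_mul_cancel hq.ne', Real.rpow_one] at h2
    have hds : dist z xs ≤ 2*κ*‖v‖^q := hxsd.le
    have hds2 : dist z xs < ρ'/2 := by
      have h3 : 2*κ*‖v‖^q ≤ 2*κ*(ρ'/(4*κ)) :=
        mul_le_mul_of_nonneg_left hVq (by positivity)
      have h4 : 2*κ*(ρ'/(4*κ)) = ρ'/2 := by
        field_simp
        ring
      linarith
    have hxsρ : xs ∈ Metric.closedBall xbar ρ := by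
      rw [Metric.mem_closedBall]
      have h5 := dist_triangle xs z xbar
      have h6 : dist xs z = dist z xs := dist_comm _ _
      linarith
    have hxsε : xs ∈ Metric.closedBall xbar ε := by
      rw [Metric.mem_closedBall]
      have h5 := dist_triangle xs z xbar
      have h6 : dist xs z = dist z xs := dist_comm _ _
      linarith
    have hzρ : z ∈ Metric.closedBall xbar ρ := by
      rw [Metric.mem_closedBall]; linarith
    have hgxs_ne_top : g xs ≠ ⊤ := subdiff_ne_top hproper hxsS
    have hgxs_ne_bot : g xs ≠ ⊥ := hproper.2 xs
    have hFxs : Fval ψ A b g xs = (((fval ψ A b xs + (g xs).toReal : ℝ)) : EReal) := by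
      rw [EReal.coe_add, EReal.coe_toReal hgxs_ne_top hgxs_ne_bot]; rfl
    have hFxs_le : fval ψ A b xs + (g xs).toReal
        ≤ fval ψ A b xbar + (g xbar).toReal := by
      have hle := hA0 xs ⟨hxsS, hxsε⟩
      rw [hFxs, hFxb] at hle
      exact_mod_cast hle
    -- subgradient inequality at xs
    have hsg := hv xs
    have hsg' : (g z).toReal + ⟪v - gradfval gradψ A b z, xs - z⟫ ≤ (g xs).toReal := by
      have h7 : (((g z).toReal + ⟪v - gradfval gradψ A b z, xs - z⟫ : ℝ) : EReal)
          ≤ (((g xs).toReal : ℝ) : EReal) := by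
        rw [EReal.coe_add, EReal.coe_toReal hgz_ne_top hgz_ne_bot,
          EReal.coe_toReal hgxs_ne_top hgxs_ne_bot]
        exact hsg
      exact_mod_cast h7
    -- descent inequality
    have hd := descent_ineq (convex_closedBall xbar ρ) hC hfd hLip hxsρ hzρ
    -- combine
    have hxs_inner : ⟪v - gradfval gradψ A b z, xs - z⟫
        = -⟪v - gradfval gradψ A b z, z - xs⟫ := by
      rw [show xs - z = -(z - xs) by abel, inner_neg_right]
    have hinner : ⟪gradfval gradψ A b z, z - xs⟫ + ⟪v - gradfval gradψ A b z, z - xs⟫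
        = ⟪v, z - xs⟫ := by rw [inner_sub_left]; ring
    have hCS : ⟪v, z - xs⟫ ≤ ‖v‖ * ‖z - xs‖ := real_inner_le_norm _ _
    have hnd : ‖z - xs‖ = dist z xs := (dist_eq_norm _ _).symm
    have hnd2 : ‖z - xs‖^2 = dist z xs^2 := by rw [hnd]
    have ht2 : t ≤ ‖v‖ * dist z xs + C * dist z xs ^ 2 := by
      rw [htdef, ← hnd]; linarith
    -- rpow chain
    have hVq1 : ‖v‖ * dist z xs + C * dist z xs^2 ≤ C₁ * ‖v‖^p := by
      have hdn : (0:ℝ) ≤ dist z xs := dist_nonneg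
      have h1 : ‖v‖ * dist z xs ≤ ‖v‖ * (2*κ*‖v‖^q) :=
        mul_le_mul_of_nonneg_left hds (norm_nonneg v)
      have h2 : C * dist z xs^2 ≤ C * (2*κ*‖v‖^q)^2 :=
        mul_le_mul_of_nonneg_left (pow_le_pow_left₀ hdn hds 2) hC
      have e1 : ‖v‖ * ‖v‖^q = ‖v‖^(1+q) := by
        rw [Real.rpow_add hV, Real.rpow_one]
      have e2 : (‖v‖^q)^2 = ‖v‖^(2*q) := by
        rw [← Real.rpow_natCast (‖v‖^q) 2, ← Real.rpow_mul (norm_nonneg v)]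
        norm_num [mul_comm]
      have m1 : ‖v‖^(1+q) ≤ ‖v‖^p :=
        Real.rpow_le_rpow_of_exponent_ge hV (hVs.trans hv₀1) (min_le_right _ _)
      have m2 : ‖v‖^(2*q) ≤ ‖v‖^p :=
        Real.rpow_le_rpow_of_exponent_ge hV (hVs.trans hv₀1) (min_le_left _ _)
      calc ‖v‖ * dist z xs + C * dist z xs^2
          ≤ ‖v‖ * (2*κ*‖v‖^q) + C * (2*κ*‖v‖^q)^2 := by linarith
        _ = 2*κ*(‖v‖ * ‖v‖^q) + 4*C*κ^2*((‖v‖^q)^2) := by ring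
        _ = 2*κ*‖v‖^(1+q) + 4*C*κ^2*‖v‖^(2*q) := by rw [e1, e2]
        _ ≤ 2*κ*‖v‖^p + 4*C*κ^2*‖v‖^p := by
            have h8 : 0 ≤ 4*C*κ^2 := by positivity
            have h9 : (0:ℝ) ≤ 2*κ := by positivity
            exact add_le_add (mul_le_mul_of_nonneg_left m1 h9)
              (mul_le_mul_of_nonneg_left m2 h8)
        _ = C₁ * ‖v‖^p := by rw [hC₁def]; ring
    have hfinal : t ≤ C₁ * ‖v‖^p := le_trans ht2 hVq1
    have h5 : t^(1/p) ≤ (C₁ * ‖v‖^p)^(1/p) :=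
      Real.rpow_le_rpow ht.le hfinal (by positivity)
    have h6 : (C₁ * ‖v‖^p)^(1/p) = C₁^(1/p) * ‖v‖ := by
      rw [Real.mul_rpow hC₁.le (Real.rpow_nonneg (norm_nonneg v) p),
        ← Real.rpow_mul (norm_nonneg v), mul_one_div_cancel hp.ne', Real.rpow_one]
    rw [h6] at h5
    have h7 : c ≤ C₁^(-(1/p)) := min_le_right _ _
    have h8 : c * t^(1/p) ≤ C₁^(-(1/p)) * t^(1/p) :=
      mul_le_mul_of_nonneg_right h7 (Real.rpow_nonneg ht.le _)
    have h9 : C₁^(-(1/p)) * t^(1/p) ≤ C₁^(-(1/p)) * (C₁^(1/p) * ‖v‖) :=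
      mul_le_mul_of_nonneg_left h5 (Real.rpow_pos_of_pos hC₁ _).le
    have h10 : C₁^(-(1/p)) * (C₁^(1/p) * ‖v‖) = ‖v‖ := by
      rw [← mul_assoc, ← Real.rpow_add hC₁, neg_add_cancel, Real.rpow_zero, one_mul]
    linarith
  · -- large gradient case
    push_neg at hVs
    have htle : t ≤ 1 := by linarith
    have h1 : t^(1/p) ≤ 1 := Real.rpow_le_one ht.le htle (by positivity)
    have h2 : c * t^(1/p) ≤ v₀ * 1 :=
      mul_le_mul (min_le_left _ _) h1 (Real.rpow_nonneg ht.le _) hv₀.le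
    linarith

end
end

section
/- Let {x^k}, {y^k} be generated by Algorithm IRPNM with ρ ∈ (0,1), and for each k let x̄^k denote the unique minimizer of the strongly convex function Θ_k. Then for every k, ‖y^k − x̄^k‖ ≤ a₂⁻¹ η (1 + ‖G_k‖) r(x^k)^{1+τ−ρ}, where ‖G_k‖ is the spectral norm of G_k. -/
open Set Metric Filter Bornology
open scoped RealInnerProductSpace Topology ENNReal

noncomputable section

/-- The data and assumptions of Algorithm IRPNM (inexact regularized proximal Newton method),
producing an infinite sequence of iterates `x k` with `r(x k) > 0` for all `k`. -/
structure IRPNM (n m : ℕ) where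
  ψ : Eu m → ℝ
  gradψ : Eu m → Eu m
  hessψ : Eu m → (Eu m →L[ℝ] Eu m)
  A : Eu n →L[ℝ] Eu m
  b : Eu m
  g : Eu n → EReal
  prox : Eu n → Eu n
  O : Set (Eu n)
  a₁ : ℝ
  a₂ : ℝ
  ρ : ℝ
  τ : ℝ
  η : ℝ
  β : ℝ
  σ : ℝ
  x : ℕ → Eu n
  y : ℕ → Eu n
  d : ℕ → Eu n
  mik : ℕ → ℕ
  α : ℕ → ℝ
  basic : BasicAssumptions ψ gradψ hessψ A b g prox O
  ha₁ : 1 ≤ a₁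
  ha₂ : 0 < a₂
  hρ : 0 ≤ ρ ∧ ρ < 1
  hτ : ρ ≤ τ
  hη : 0 < η ∧ η < 1
  hβ : 0 < β ∧ β < 1
  hσ : 0 < σ ∧ σ < 1/2
  hxdom : ∀ k, x k ∈ domg g
  hydom : ∀ k, y k ∈ domg g
  hrpos : ∀ k, 0 < rres gradψ A b prox (x k)
  /-- the inexactness criterion (3.1), used when `ρ ∈ (0,1)` -/
  hinexact_pos : 0 < ρ → ∀ k,
    rkRes gradψ A b prox
        (GkOf hessψ A b a₁ (a₂ * (rres gradψ A b prox (x k)) ^ ρ) (x k)) (x k) (y k)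
      ≤ η * min (rres gradψ A b prox (x k)) ((rres gradψ A b prox (x k)) ^ (1 + τ)) ∧
    ThetaK ψ gradψ A b g (GkOf hessψ A b a₁ (a₂ * (rres gradψ A b prox (x k)) ^ ρ) (x k))
        (x k) (y k)
      ≤ ThetaK ψ gradψ A b g (GkOf hessψ A b a₁ (a₂ * (rres gradψ A b prox (x k)) ^ ρ) (x k))
        (x k) (x k)
  /-- the inexactness criterion (3.2), used when `ρ = 0`:
  `dist(0, ∂Θ_k(y k)) ≤ η r(x k)` and `Θ_k(y k) ≤ Θ_k(x k)` -/
  hinexact_zero : ρ = 0 → ∀ k,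
    (∃ v ∈ subdiff g (y k),
        ‖gradfval gradψ A b (x k)
            + (GkOf hessψ A b a₁ (a₂ * (rres gradψ A b prox (x k)) ^ ρ) (x k)) (y k - x k)
            + v‖
          ≤ η * rres gradψ A b prox (x k)) ∧
    ThetaK ψ gradψ A b g (GkOf hessψ A b a₁ (a₂ * (rres gradψ A b prox (x k)) ^ ρ) (x k))
        (x k) (y k)
      ≤ ThetaK ψ gradψ A b g (GkOf hessψ A b a₁ (a₂ * (rres gradψ A b prox (x k)) ^ ρ) (x k))
        (x k) (x k)
  hd : ∀ k, d k = y k - x k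
  /-- `mk k` is the smallest nonnegative integer `M` satisfying the Armijo condition -/
  hls : ∀ k,
    ArmijoOK ψ A b g σ β (a₂ * (rres gradψ A b prox (x k)) ^ ρ) (x k) (d k) (mik k) ∧
    ∀ M < mik k, ¬ ArmijoOK ψ A b g σ β (a₂ * (rres gradψ A b prox (x k)) ^ ρ) (x k) (d k) M
  hα : ∀ k, α k = β ^ (mik k)
  /-- the update rule (3.6) -/
  hupdate : ∀ k,
    (Fval ψ A b g (y k) < Fval ψ A b g (x k + α k • d k) ∧ x (k+1) = y k) ∨
    (¬ Fval ψ A b g (y k) < Fval ψ A b g (x k + α k • d k) ∧ x (k+1) = x k + α k • d k)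

end

noncomputable section

lemma le_of_forall_small {c d K : ℝ} (h : ∀ t : ℝ, 0 < t → t ≤ 1 → c ≤ d + t * K) : c ≤ d := by
  refine le_of_forall_pos_le_add fun ε hε => ?_
  set t := min 1 (ε / (|K| + 1)) with ht
  have ht0 : 0 < t := lt_min one_pos (by positivity)
  have h2 : t * K ≤ ε := by
    calc t * K ≤ t * |K| := mul_le_mul_of_nonneg_left (le_abs_self K) ht0.le
    _ ≤ (ε / (|K| + 1)) * (|K| + 1) := by
          apply mul_le_mul (min_le_right _ _) (by linarith [abs_nonneg K]) (abs_nonneg K)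
          positivity
    _ = ε := by field_simp
  linarith [h t ht0 (min_le_left _ _)]

lemma prox_notTop {n : ℕ} {g : Eu n → EReal} {prox : Eu n → Eu n}
    (hprox : IsProxOf g prox) (hbot : ∀ x, g x ≠ ⊥) {z0 : Eu n} (h0 : g z0 ≠ ⊤)
    (w : Eu n) : g (prox w) ≠ ⊤ := by
  intro htop
  have h := hprox w z0
  rw [htop, ← EReal.coe_toReal h0 (hbot z0), EReal.coe_add_top, ← EReal.coe_add, top_le_iff] at h
  exact EReal.coe_ne_top _ h

/-- The subgradient inequality for the proximal point. -/
lemma prox_subdiff {n : ℕ} {g : Eu n → EReal} {prox : Eu n → Eu n}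
    (hconv : ConvexFun g) (hprox : IsProxOf g prox) (hbot : ∀ x, g x ≠ ⊥)
    (w : Eu n) (hfin : g (prox w) ≠ ⊤) : w - prox w ∈ subdiff g (prox w) := by
  intro z
  set p := prox w with hp
  rcases eq_or_ne (g z) ⊤ with hz | hz
  · rw [hz]; exact le_top
  set gp := (g p).toReal with hgp
  set gz := (g z).toReal with hgz
  have egp : ((gp : ℝ) : EReal) = g p := EReal.coe_toReal hfin (hbot p)
  have egz : ((gz : ℝ) : EReal) = g z := EReal.coe_toReal hz (hbot z)
  have key : gp ≤ (⟪p - w, z - p⟫ + gz) + ‖z - p‖ ^ 2 / 2 * 0 + 0 := by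
    have : gp ≤ ⟪p - w, z - p⟫ + gz := by
      apply le_of_forall_small (K := ‖z - p‖ ^ 2 / 2)
      intro t ht0 ht1
      have hzt : p + t • (z - p) = (1 - t) • p + t • z := by
        rw [sub_smul, smul_sub, one_smul]; abel
      have hcv : g (p + t • (z - p)) ≤ (((1 - t) * gp + t * gz : ℝ) : EReal) := by
        rw [hzt, EReal.coe_add, EReal.coe_mul, EReal.coe_mul, egp, egz]
        exact hconv p z (1 - t) t (by linarith) ht0.le (by ring)
      have hpx := hprox w (p + t • (z - p))
      have chain : ((‖p - w‖ ^ 2 / 2 : ℝ) : EReal) + ((gp : ℝ) : EReal)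
          ≤ ((‖p + t • (z - p) - w‖ ^ 2 / 2 + ((1 - t) * gp + t * gz) : ℝ) : EReal) := by
        rw [EReal.coe_add, egp]
        exact le_trans hpx (add_le_add_right hcv _)
      rw [← EReal.coe_add, EReal.coe_le_coe_iff] at chain
      have hexp : ‖p + t • (z - p) - w‖ ^ 2
          = ‖p - w‖ ^ 2 + 2 * (t * ⟪p - w, z - p⟫) + t ^ 2 * ‖z - p‖ ^ 2 := by
        have : p + t • (z - p) - w = (p - w) + t • (z - p) := by abel
        rw [this, norm_add_sq_real, real_inner_smul_right, norm_smul]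
        simp [mul_pow, abs_of_nonneg ht0.le]
      rw [hexp] at chain
      have tineq : t * gp ≤ t * (⟪p - w, z - p⟫ + gz + t * (‖z - p‖ ^ 2 / 2)) := by nlinarith
      have := le_of_mul_le_mul_left (by linarith [tineq] : t * gp ≤ t * (⟪p - w, z - p⟫ + gz + t * (‖z - p‖ ^ 2 / 2))) ht0
      linarith
    linarith
  rw [← egp, ← egz, ← EReal.coe_add, EReal.coe_le_coe_iff]
  have : ⟪w - p, z - p⟫ = -⟪p - w, z - p⟫ := by
    rw [← inner_neg_left]; norm_num
  linarith [key]

/-- Subgradient at the minimizer of a quadratic-plus-`g` function. -/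
lemma min_subdiff {n : ℕ} {g : Eu n → EReal}
    (hconv : ConvexFun g) (hbot : ∀ x, g x ≠ ⊥)
    (c0 : ℝ) (L : Eu n) (G : Eu n →L[ℝ] Eu n)
    (hGsym : ∀ v w : Eu n, ⟪G v, w⟫ = ⟪v, G w⟫)
    (xk xb : Eu n) (hfin : g xb ≠ ⊤)
    (hmin : ∀ z : Eu n,
      ((c0 + ⟪L, xb - xk⟫ + ⟪xb - xk, G (xb - xk)⟫ / 2 : ℝ) : EReal) + g xb
        ≤ ((c0 + ⟪L, z - xk⟫ + ⟪z - xk, G (z - xk)⟫ / 2 : ℝ) : EReal) + g z) :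
    -(L + G (xb - xk)) ∈ subdiff g xb := by
  intro z
  rcases eq_or_ne (g z) ⊤ with hz | hz
  · rw [hz]; exact le_top
  set gb := (g xb).toReal with hgb
  set gz := (g z).toReal with hgz
  have egb : ((gb : ℝ) : EReal) = g xb := EReal.coe_toReal hfin (hbot xb)
  have egz : ((gz : ℝ) : EReal) = g z := EReal.coe_toReal hz (hbot z)
  set a := xb - xk with ha
  set e := z - xb with he
  have key : gb ≤ (⟪L, e⟫ + ⟪G a, e⟫ + gz) := by
    apply le_of_forall_small (K := ⟪e, G e⟫ / 2)
    intro t ht0 ht1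
    have hzt : xb + t • e = (1 - t) • xb + t • z := by
      rw [he, sub_smul, one_smul, smul_sub]; abel
    have hcv : g (xb + t • e) ≤ (((1 - t) * gb + t * gz : ℝ) : EReal) := by
      rw [hzt, EReal.coe_add, EReal.coe_mul, EReal.coe_mul, egb, egz]
      exact hconv xb z (1 - t) t (by linarith) ht0.le (by ring)
    have hmt := hmin (xb + t • e)
    have hsub : xb + t • e - xk = a + t • e := by rw [ha]; abel
    have hquad : ⟪a + t • e, G (a + t • e)⟫
        = ⟪a, G a⟫ + 2 * (t * ⟪G a, e⟫) + t ^ 2 * ⟪e, G e⟫ := by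
      rw [map_add, inner_add_left, inner_add_right, inner_add_right, map_smul,
        real_inner_smul_left, real_inner_smul_left, real_inner_smul_right,
        real_inner_smul_right]
      have h1 : ⟪a, G e⟫ = ⟪G a, e⟫ := (hGsym a e).symm
      have h2 : ⟪e, G a⟫ = ⟪G a, e⟫ := real_inner_comm _ _
      rw [h1, h2]; ring
    have hlin : ⟪L, xb + t • e - xk⟫ = ⟪L, a⟫ + t * ⟪L, e⟫ := by
      rw [hsub, inner_add_right, real_inner_smul_right]
    have chain : ((c0 + ⟪L, a⟫ + ⟪a, G a⟫ / 2 : ℝ) : EReal) + ((gb : ℝ) : EReal)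
        ≤ ((c0 + (⟪L, a⟫ + t * ⟪L, e⟫)
            + (⟪a, G a⟫ + 2 * (t * ⟪G a, e⟫) + t ^ 2 * ⟪e, G e⟫) / 2
            + ((1 - t) * gb + t * gz) : ℝ) : EReal) := by
      rw [EReal.coe_add (c0 + (⟪L, a⟫ + t * ⟪L, e⟫)
            + (⟪a, G a⟫ + 2 * (t * ⟪G a, e⟫) + t ^ 2 * ⟪e, G e⟫) / 2), egb]
      refine le_trans ?_ (add_le_add_right hcv _)
      have := hmt
      rw [hsub] at this
      rw [hquad, inner_add_right, real_inner_smul_right] at this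
      exact this
    rw [← EReal.coe_add, EReal.coe_le_coe_iff] at chain
    have tineq : t * gb ≤ t * (⟪L, e⟫ + ⟪G a, e⟫ + gz + t * (⟪e, G e⟫ / 2)) := by nlinarith
    have := le_of_mul_le_mul_left tineq ht0
    linarith
  rw [← egb, ← egz, ← EReal.coe_add, EReal.coe_le_coe_iff]
  have hneg : ⟪-(L + G a), z - xb⟫ = -(⟪L, e⟫ + ⟪G a, e⟫) := by
    rw [inner_neg_left, inner_add_left, he]
  rw [hneg]; linarith

/-- Symmetry of `∇²f = Aᵀ ∇²ψ A` at points of `O`, via Schwarz's theorem. -/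
lemma hessf_symm {n m : ℕ} {ψ : Eu m → ℝ} {gradψ : Eu m → Eu m}
    {hessψ : Eu m → (Eu m →L[ℝ] Eu m)} {A : Eu n →L[ℝ] Eu m} {b : Eu m} {O : Set (Eu n)}
    (hO : IsOpen O) (hdiff : TwiceDiffOn ψ gradψ hessψ A b O) {x : Eu n} (hx : x ∈ O) :
    ∀ v w : Eu n, ⟪hessψ (A x - b) (A v), A w⟫ = ⟪hessψ (A x - b) (A w), A v⟫ := by
  obtain ⟨hgrad, hhess, -, -⟩ := hdiff
  set e : Eu n → Eu m := fun z => A z - b with he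
  have heD : ∀ y : Eu n, HasFDerivAt e (A : Eu n →L[ℝ] Eu m) y := fun y =>
    (A.hasFDerivAt).sub_const b
  set Ψ : Eu m →L[ℝ] (Eu n →L[ℝ] ℝ) :=
    ((ContinuousLinearMap.compL ℝ (Eu n) (Eu m) ℝ).flip A).comp
      (InnerProductSpace.toDual ℝ (Eu m)).toContinuousLinearEquiv.toContinuousLinearMap with hΨ
  have hΨapp : ∀ (v : Eu m) (w : Eu n), Ψ v w = ⟪v, A w⟫ := by
    intro v w
    simp [hΨ, InnerProductSpace.toDual_apply_apply]
  set Φ : Eu n → (Eu n →L[ℝ] ℝ) := fun y => Ψ (gradψ (e y)) with hΦ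
  have claim1 : ∀ y ∈ O, HasFDerivAt (fun z => ψ (e z)) (Φ y) y := by
    intro y hy
    have h1 : HasFDerivAt ψ ((InnerProductSpace.toDual ℝ (Eu m)) (gradψ (e y))) (e y) :=
      (hgrad (e y) ⟨y, hy, rfl⟩).hasFDerivAt
    have := h1.comp y (heD y)
    have h3 : Φ y = (InnerProductSpace.toDual ℝ (Eu m)) (gradψ (e y)) ∘SL A := by
      ext v; simp [hΦ, hΨapp, InnerProductSpace.toDual_apply_apply]
    rw [h3]; exact this
  have claim2 : HasFDerivAt Φ (Ψ.comp ((hessψ (e x)).comp A)) x := by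
    have h2 : HasFDerivAt (fun y => gradψ (e y)) ((hessψ (e x)).comp A) x :=
      (hhess (e x) ⟨x, hx, rfl⟩).comp x (heD x)
    exact (Ψ.hasFDerivAt).comp x h2
  have hsymm := second_derivative_symmetric_of_eventually
    (f := fun z => ψ (e z)) (f' := Φ)
    (Filter.eventually_of_mem (hO.mem_nhds hx) claim1) claim2
  intro v w
  have h1 := hsymm v w
  simpa [hΨapp] using h1

lemma lamMin_le {m : ℕ} (T : Eu m →L[ℝ] Eu m) {u : Eu m} (hu : u ≠ 0) :
    lamMin T * ‖u‖ ^ 2 ≤ ⟪T u, u⟫ := by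
  have hnorm : (0:ℝ) < ‖u‖ := norm_pos_iff.mpr hu
  have hmem : (‖u‖⁻¹ • u) ∈ Metric.sphere (0 : Eu m) 1 := by
    simp [norm_smul, abs_of_nonneg (norm_nonneg u), inv_mul_cancel₀ (norm_ne_zero_iff.mpr hu)]
  have hbdd : BddBelow ((fun v => ⟪T v, v⟫) '' Metric.sphere (0 : Eu m) 1) := by
    refine ⟨-‖T‖, ?_⟩
    rintro y ⟨v, hv, rfl⟩
    have hv1 : ‖v‖ = 1 := by simpa using hv
    have h1 := abs_real_inner_le_norm (T v) v
    have h2 := T.le_opNorm v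
    rw [hv1, mul_one] at h1 h2
    linarith [neg_abs_le (⟪T v, v⟫ : ℝ)]
  have hle : lamMin T ≤ ⟪T (‖u‖⁻¹ • u), ‖u‖⁻¹ • u⟫ :=
    csInf_le hbdd ⟨_, hmem, rfl⟩
  rw [map_smul, real_inner_smul_left, real_inner_smul_right] at hle
  calc lamMin T * ‖u‖ ^ 2 ≤ (‖u‖⁻¹ * (‖u‖⁻¹ * ⟪T u, u⟫)) * ‖u‖ ^ 2 :=
        mul_le_mul_of_nonneg_right hle (sq_nonneg _)
  _ = ⟪T u, u⟫ := by
        rw [pow_two]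
        field_simp

lemma Gk_coercive {n m : ℕ} (hessψ : Eu m → (Eu m →L[ℝ] Eu m)) (A : Eu n →L[ℝ] Eu m)
    (b : Eu m) {a₁ μ : ℝ} (ha₁ : 1 ≤ a₁) (hμ : 0 ≤ μ) (xk : Eu n) (w : Eu n) :
    μ * ‖w‖ ^ 2 ≤ ⟪(GkOf hessψ A b a₁ μ xk) w, w⟫ := by
  set T := hessψ (A xk - b) with hT
  set l := lamMin T with hl
  have happ : (GkOf hessψ A b a₁ μ xk) w
      = ContinuousLinearMap.adjoint A (T (A w))
        + (a₁ * max 0 (-l)) • (ContinuousLinearMap.adjoint A (A w)) + μ • w := by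
    simp [GkOf, hessfval, hT, hl]
  rw [happ]
  rw [inner_add_left, inner_add_left, real_inner_smul_left, real_inner_smul_left,
    ContinuousLinearMap.adjoint_inner_left, ContinuousLinearMap.adjoint_inner_left]
  have hAA : (⟪A w, A w⟫ : ℝ) = ‖A w‖ ^ 2 := real_inner_self_eq_norm_sq _
  have hww : (⟪w, w⟫ : ℝ) = ‖w‖ ^ 2 := real_inner_self_eq_norm_sq _
  rw [hAA, hww]
  have hmax0 : 0 ≤ max 0 (-l) := le_max_left _ _
  have hmaxl : -l ≤ max 0 (-l) := le_max_right _ _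
  have hs : (0:ℝ) ≤ ‖A w‖ ^ 2 := sq_nonneg _
  have key : 0 ≤ (⟪T (A w), A w⟫ : ℝ) + a₁ * max 0 (-l) * ‖A w‖ ^ 2 := by
    rcases eq_or_ne (A w) 0 with h0 | h0
    · rw [h0]
      simp
    · have hll := lamMin_le T h0
      rw [← hl] at hll
      have e1 : (-l) * ‖A w‖ ^ 2 ≤ max 0 (-l) * ‖A w‖ ^ 2 :=
        mul_le_mul_of_nonneg_right hmaxl hs
      have e2 : 1 * (max 0 (-l) * ‖A w‖ ^ 2) ≤ a₁ * (max 0 (-l) * ‖A w‖ ^ 2) :=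
        mul_le_mul_of_nonneg_right ha₁ (mul_nonneg hmax0 hs)
      nlinarith
  linarith

lemma Gk_symm {n m : ℕ} {ψ : Eu m → ℝ} {gradψ : Eu m → Eu m}
    {hessψ : Eu m → (Eu m →L[ℝ] Eu m)} {A : Eu n →L[ℝ] Eu m} {b : Eu m} {O : Set (Eu n)}
    (hO : IsOpen O) (hdiff : TwiceDiffOn ψ gradψ hessψ A b O) {xk : Eu n} (hx : xk ∈ O)
    (a₁ μ : ℝ) :
    ∀ v w : Eu n, ⟪(GkOf hessψ A b a₁ μ xk) v, w⟫ = ⟪v, (GkOf hessψ A b a₁ μ xk) w⟫ := by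
  intro v w
  have hsym := hessf_symm hO hdiff hx
  simp only [GkOf, hessfval, ContinuousLinearMap.add_apply, ContinuousLinearMap.smul_apply,
    ContinuousLinearMap.coe_comp', Function.comp_apply, ContinuousLinearMap.id_apply]
  rw [inner_add_left, inner_add_left, inner_add_right, inner_add_right,
    real_inner_smul_left, real_inner_smul_right, real_inner_smul_left, real_inner_smul_right,
    ContinuousLinearMap.adjoint_inner_left, ContinuousLinearMap.adjoint_inner_left,
    ContinuousLinearMap.adjoint_inner_right, ContinuousLinearMap.adjoint_inner_right]
  rw [hsym v w, real_inner_comm (hessψ (A xk - b) (A w)) (A v)]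

set_option maxHeartbeats 1000000 in
/-- Lemma 4.2. For Algorithm IRPNM with `ρ ∈ (0,1)`, the unique
minimizer `x̄^k` of `Θ_k` satisfies
`‖y^k - x̄^k‖ ≤ a₂⁻¹ η (1 + ‖G_k‖) r(x^k)^{1+τ-ρ}` for every `k`. -/

theorem statement13 {n m : ℕ} (P : IRPNM n m) (hρ : 0 < P.ρ) (k : ℕ)
    (xbark : Eu n)
    (hmin : ∀ z : Eu n,
        ThetaK P.ψ P.gradψ P.A P.b P.g
            (GkOf P.hessψ P.A P.b P.a₁
              (P.a₂ * (rres P.gradψ P.A P.b P.prox (P.x k)) ^ P.ρ) (P.x k)) (P.x k) xbark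
          ≤ ThetaK P.ψ P.gradψ P.A P.b P.g
            (GkOf P.hessψ P.A P.b P.a₁
              (P.a₂ * (rres P.gradψ P.A P.b P.prox (P.x k)) ^ P.ρ) (P.x k)) (P.x k) z) :
    ‖P.y k - xbark‖
      ≤ P.a₂⁻¹ * P.η
        * (1 + ‖GkOf P.hessψ P.A P.b P.a₁
              (P.a₂ * (rres P.gradψ P.A P.b P.prox (P.x k)) ^ P.ρ) (P.x k)‖)
        * (rres P.gradψ P.A P.b P.prox (P.x k)) ^ (1 + P.τ - P.ρ) := by
  obtain ⟨hO, hdom, hdiff, hproper, hconv, -, -, hprox, -, -⟩ := P.basic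
  have hbot := hproper.2
  set r := rres P.gradψ P.A P.b P.prox (P.x k) with hrdef
  have hr : 0 < r := P.hrpos k
  set μ : ℝ := P.a₂ * r ^ P.ρ with hμdef
  have hμpos : 0 < μ := mul_pos P.ha₂ (Real.rpow_pos_of_pos hr _)
  set G := GkOf P.hessψ P.A P.b P.a₁ μ (P.x k) with hGdef
  set gf := gradfval P.gradψ P.A P.b (P.x k) with hgf
  set w0 : Eu n := P.y k - gf - G (P.y k - P.x k) with hw0
  set u : Eu n := P.prox w0 with hu
  set R : Eu n := P.y k - u with hR
  set s : Eu n := P.y k - xbark with hs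
  -- the inexactness bound
  have hRr : ‖R‖ ≤ P.η * min r (r ^ (1 + P.τ)) := by
    have h := (P.hinexact_pos hρ k).1
    simpa only [rkRes, RkRes, ← hrdef, ← hμdef, ← hGdef, ← hgf, ← hw0, ← hu, ← hR] using h
  have hRr2 : ‖R‖ ≤ P.η * r ^ (1 + P.τ) := by
    refine le_trans hRr (mul_le_mul_of_nonneg_left (min_le_right _ _) P.hη.1.le)
  -- symmetry of G
  have hGsym : ∀ v w : Eu n, ⟪G v, w⟫ = ⟪v, G w⟫ :=
    Gk_symm hO hdiff (hdom (P.hxdom k)) P.a₁ μ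
  -- finiteness
  have hfinxk : P.g (P.x k) ≠ ⊤ := P.hxdom k
  have hfinu : P.g u ≠ ⊤ := prox_notTop hprox hbot hfinxk w0
  have hfinb : P.g xbark ≠ ⊤ := by
    intro htop
    have h := hmin (P.x k)
    simp only [ThetaK, ← hrdef, ← hμdef, ← hGdef, ← hgf] at h
    rw [htop, ← EReal.coe_toReal hfinxk (hbot _), EReal.coe_add_top, ← EReal.coe_add,
      top_le_iff] at h
    exact EReal.coe_ne_top _ h
  -- subgradients
  have hv : w0 - u ∈ subdiff P.g u := prox_subdiff hconv hprox hbot w0 hfinu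
  have hvb : -(gf + G (xbark - P.x k)) ∈ subdiff P.g xbark := by
    refine min_subdiff hconv hbot (fval P.ψ P.A P.b (P.x k)) gf G hGsym (P.x k) xbark hfinb
      (fun z => ?_)
    have h := hmin z
    simpa only [ThetaK, ← hrdef, ← hμdef, ← hGdef, ← hgf] using h
  -- monotonicity of the subdifferential
  set gu := (P.g u).toReal with hgu
  set gb := (P.g xbark).toReal with hgb
  have egu : ((gu : ℝ) : EReal) = P.g u := EReal.coe_toReal hfinu (hbot u)
  have egb : ((gb : ℝ) : EReal) = P.g xbark := EReal.coe_toReal hfinb (hbot xbark)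
  have h1 : gu + ⟪w0 - u, xbark - u⟫ ≤ gb := by
    have := hv xbark
    rw [← egu, ← egb, ← EReal.coe_add, EReal.coe_le_coe_iff] at this
    exact this
  have h2 : gb + ⟪-(gf + G (xbark - P.x k)), u - xbark⟫ ≤ gu := by
    have := hvb u
    rw [← egu, ← egb, ← EReal.coe_add, EReal.coe_le_coe_iff] at this
    exact this
  -- vector identities
  have hGsub : G (P.y k - P.x k) - G (xbark - P.x k) = G s := by
    rw [← map_sub]; congr 1; rw [hs]; abel
  have hkey : (0:ℝ) ≤ ⟪(R - G s), (s - R)⟫ := by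
    have hxu : xbark - u = -(u - xbark) := by abel
    rw [hxu, inner_neg_right] at h1
    have hsum : ⟪(w0 - u) - (-(gf + G (xbark - P.x k))), u - xbark⟫ ≥ 0 := by
      rw [inner_sub_left]
      linarith
    have hid1 : (w0 - u) - (-(gf + G (xbark - P.x k))) = R - G s := by
      rw [hw0, hR, ← hGsub]
      abel
    have hid2 : u - xbark = s - R := by rw [hs, hR]; abel
    rw [hid1, hid2] at hsum
    exact hsum
  -- coercivity and norm bounds
  have hcoerc : μ * ‖s‖ ^ 2 ≤ ⟪G s, s⟫ := Gk_coercive P.hessψ P.A P.b P.ha₁ hμpos.le (P.x k) s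
  have hexp : ⟪(R - G s), (s - R)⟫
      = ⟪R, s⟫ - ⟪R, R⟫ - ⟪G s, s⟫ + ⟪G s, R⟫ := by
    simp only [inner_sub_left, inner_sub_right]; ring
  have hb1 : (⟪R, s⟫ : ℝ) ≤ ‖R‖ * ‖s‖ := real_inner_le_norm _ _
  have hb2 : (⟪G s, R⟫ : ℝ) ≤ ‖G‖ * ‖s‖ * ‖R‖ := by
    calc (⟪G s, R⟫ : ℝ) ≤ ‖G s‖ * ‖R‖ := real_inner_le_norm _ _
    _ ≤ ‖G‖ * ‖s‖ * ‖R‖ :=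
        mul_le_mul_of_nonneg_right (G.le_opNorm s) (norm_nonneg _)
  have hRR : (⟪R, R⟫ : ℝ) = ‖R‖ ^ 2 := real_inner_self_eq_norm_sq _
  have hmain : μ * ‖s‖ ^ 2 ≤ (1 + ‖G‖) * ‖R‖ * ‖s‖ := by nlinarith [sq_nonneg ‖R‖]
  -- conclusion
  have hgoal : ‖s‖ ≤ P.a₂⁻¹ * P.η * (1 + ‖G‖) * r ^ (1 + P.τ - P.ρ) := by
    set T := P.a₂⁻¹ * P.η * (1 + ‖G‖) * r ^ (1 + P.τ - P.ρ) with hT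
    have hrr : r ^ P.ρ * r ^ (1 + P.τ - P.ρ) = r ^ (1 + P.τ) := by
      rw [← Real.rpow_add hr]
      congr 1
      ring
    have hμT : μ * T = P.η * ((1 + ‖G‖) * r ^ (1 + P.τ)) := by
      have hstep : μ * T
          = (P.a₂ * P.a₂⁻¹) * (P.η * ((1 + ‖G‖) * (r ^ P.ρ * r ^ (1 + P.τ - P.ρ)))) := by
        rw [hT, hμdef]; ring
      rw [hstep, mul_inv_cancel₀ P.ha₂.ne', one_mul, hrr]
    have hG0 : (0:ℝ) ≤ 1 + ‖G‖ := by linarith [norm_nonneg G]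
    have hRT : (1 + ‖G‖) * ‖R‖ ≤ μ * T / 1 := by
      rw [hμT]
      calc (1 + ‖G‖) * ‖R‖ ≤ (1 + ‖G‖) * (P.η * r ^ (1 + P.τ)) :=
            mul_le_mul_of_nonneg_left hRr2 hG0
      _ = P.η * ((1 + ‖G‖) * r ^ (1 + P.τ)) / 1 := by ring
    rw [div_one] at hRT
    rcases eq_or_lt_of_le (norm_nonneg s) with hs0 | hs0
    · rw [← hs0]
      have : 0 ≤ T := by
        rw [hT]
        exact mul_nonneg (mul_nonneg (mul_nonneg (inv_nonneg.mpr P.ha₂.le) P.hη.1.le) hG0)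
          (Real.rpow_pos_of_pos hr _).le
      linarith
    · have hstep : μ * ‖s‖ ≤ μ * T := by
        have h5 : μ * ‖s‖ * ‖s‖ ≤ (1 + ‖G‖) * ‖R‖ * ‖s‖ := by nlinarith
        have h6 : μ * ‖s‖ ≤ (1 + ‖G‖) * ‖R‖ := le_of_mul_le_mul_right h5 hs0
        linarith
      exact le_of_mul_le_mul_left hstep hμpos
  simpa only [← hs, ← hrdef, ← hμdef, ← hGdef] using hgoal


end
end
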